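/- Let G be a distribution function that is not regular, i.e. either G(G_*−) < 1 or limsup_{x→G_*−} (1 − G(x−))/(1 − G(x)) > 1. Then there is no γ ∈ (0,1) and no sequence (v_n) of reals with G(v_n)^n → γ. -/

import Mathlib

open MeasureTheory Filter Topology Set

noncomputable section

/-- Event that the partial maximum `max_{0 ≤ j ≤ n-1} X_j` is at most `x`
(empty maximum interpreted as `-∞`, so the event is everything for `n = 0`). -/
def maxEvent {Ω : Type*} (X : ℕ → Ω → ℝ) (n : ℕ) (x : ℝ) : Set Ω :=
  {ω | ∀ j < n, X j ω ≤ x}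

/-- `G` is a distribution function: nondecreasing, right-continuous, with limits
`0` at `-∞` and `1` at `+∞`. -/
def IsDistFun (G : ℝ → ℝ) : Prop :=
  Monotone G ∧ (∀ x, ContinuousWithinAt G (Set.Ici x) x) ∧
    Tendsto G atBot (nhds 0) ∧ Tendsto G atTop (nhds 1)

/-- `G` is a phantom distribution function for `X` under `P`:
`sup_x |P(M_n ≤ x) - G(x)^n| → 0`. -/
def IsPhantom {Ω : Type*} [MeasurableSpace Ω] (P : Measure Ω) (X : ℕ → Ω → ℝ)
    (G : ℝ → ℝ) : Prop :=
  Tendsto (fun n => ⨆ x : ℝ, |(P (maxEvent X n x)).toReal - G x ^ n|) atTop (nhds 0)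

/-- The right end `G_* = sup {x : G x < 1}`, as an extended real. -/
def GstarE (G : ℝ → ℝ) : EReal := sSup ((fun x : ℝ => (x : EReal)) '' {x | G x < 1})

/-- The filter of real numbers approaching `c ∈ (-∞, +∞]` strictly from the left
(equals `atTop` when `c = ⊤`). -/
def leftFilter (c : EReal) : Filter ℝ :=
  Filter.comap (fun x : ℝ => (x : EReal)) (nhdsWithin c (Set.Iio c))

/-- Regularity in the sense of O'Brien: `G(G_*-) = 1` and
`(1 - G(x-))/(1 - G(x)) → 1` as `x → G_*-`. -/
def IsRegularDF (G : ℝ → ℝ) : Prop :=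
  Tendsto G (leftFilter (GstarE G)) (nhds 1) ∧
    Tendsto (fun x => (1 - Function.leftLim G x) / (1 - G x))
      (leftFilter (GstarE G)) (nhds 1)

theorem no_levels_for_irregular (G : ℝ → ℝ) (hG : IsDistFun G)
    (hirr : (∃ L : ℝ, L < 1 ∧ Tendsto G (leftFilter (GstarE G)) (nhds L)) ∨
      1 < Filter.limsup (fun x => (1 - Function.leftLim G x) / (1 - G x))
            (leftFilter (GstarE G))) :
    ¬ ∃ γ ∈ Set.Ioo (0 : ℝ) 1, ∃ v : ℕ → ℝ,
        Tendsto (fun n => G (v n) ^ n) atTop (nhds γ) := by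
  classical
  rintro ⟨γ, ⟨hγ0, hγ1⟩, v, hconv⟩
  obtain ⟨hmono, -, hbot, htop⟩ := hG
  set c : EReal := GstarE G with hc
  -- basic bounds on G
  have hle1 : ∀ x, G x ≤ 1 := fun x =>
    ge_of_tendsto htop (eventually_atTop.2 ⟨x, fun y hy => hmono hy⟩)
  have hge0 : ∀ x, 0 ≤ G x := fun x =>
    le_of_tendsto hbot (eventually_atBot.2 ⟨x, fun y hy => hmono hy⟩)
  -- eventually 0 < G (v n) < 1
  have hB : ∀ᶠ n in atTop, 0 < G (v n) ∧ G (v n) < 1 := by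
    have hmem : Set.Ioo (γ / 2) ((1 + γ) / 2) ∈ nhds γ := by
      apply Ioo_mem_nhds <;> linarith
    filter_upwards [hconv.eventually hmem, eventually_ge_atTop 1] with n hn hn1
    constructor
    · by_contra h
      push_neg at h
      have : G (v n) = 0 := le_antisymm h (hge0 _)
      rw [this, zero_pow (by omega)] at hn
      have := hn.1; linarith
    · by_contra h
      push_neg at h
      have : G (v n) = 1 := le_antisymm (hle1 _) h
      rw [this, one_pow] at hn
      have := hn.2; linarith
  -- log limit
  have h1 : Tendsto (fun n : ℕ => (n : ℝ) * Real.log (G (v n))) atTop (nhds (Real.log γ)) := by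
    have := (Real.continuousAt_log (ne_of_gt hγ0)).tendsto.comp hconv
    refine this.congr fun n => ?_
    simp [Function.comp, Real.log_pow]
  -- G (v n) → 1
  have h2 : Tendsto (fun n => Real.log (G (v n))) atTop (nhds 0) := by
    have hmul : Tendsto (fun n : ℕ => ((n : ℝ) * Real.log (G (v n))) * (n : ℝ)⁻¹) atTop
        (nhds (Real.log γ * 0)) := h1.mul tendsto_inv_atTop_nhds_zero_nat
    rw [mul_zero] at hmul
    refine hmul.congr' ?_
    filter_upwards [eventually_ge_atTop 1] with n hn
    have : (n : ℝ) ≠ 0 := Nat.cast_ne_zero.2 (by omega)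
    field_simp
  have h3 : Tendsto (fun n => G (v n)) atTop (nhds 1) := by
    have := (Real.continuous_exp.tendsto 0).comp h2
    rw [Real.exp_zero] at this
    refine this.congr' ?_
    filter_upwards [hB] with n hn
    simp [Function.comp, Real.exp_log hn.1]
  -- slope of log at 1
  have hslope : Tendsto (fun n => Real.log (G (v n)) / (G (v n) - 1)) atTop (nhds 1) := by
    have hd : HasDerivAt Real.log 1 1 := by
      simpa using Real.hasDerivAt_log one_ne_zero
    have hs := hasDerivAt_iff_tendsto_slope.1 hd
    have hcomp : Tendsto (fun n => G (v n)) atTop (nhdsWithin 1 {(1 : ℝ)}ᶜ) := by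
      rw [tendsto_nhdsWithin_iff]
      refine ⟨h3, ?_⟩
      filter_upwards [hB] with n hn
      exact ne_of_lt hn.2
    have := hs.comp hcomp
    refine this.congr fun n => ?_
    simp [Function.comp, slope_def_field, div_eq_div_iff]
  -- n (1 - G (v n)) → - log γ
  have hlogγ : Real.log γ < 0 := Real.log_neg hγ0 hγ1
  have h5 : Tendsto (fun n : ℕ => (n : ℝ) * (1 - G (v n))) atTop (nhds (-Real.log γ)) := by
    have hinv : Tendsto (fun n => -1 / (Real.log (G (v n)) / (G (v n) - 1))) atTop
        (nhds (-1 / 1)) := (tendsto_const_nhds.div hslope one_ne_zero)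
    have hmul := h1.mul hinv
    have : Real.log γ * (-1 / 1) = -Real.log γ := by ring
    rw [this] at hmul
    refine hmul.congr' ?_
    filter_upwards [hB] with n hn
    have hlogne : Real.log (G (v n)) ≠ 0 :=
      ne_of_lt (Real.log_neg hn.1 hn.2)
    have hne : G (v n) - 1 ≠ 0 := by intro h; apply hlogne; rw [show G (v n) = 1 by linarith]; simp
    field_simp
    ring
  have hc0pos : 0 < -Real.log γ := by linarith
  -- 1 - G (v n) → 0
  have h6 : Tendsto (fun n => 1 - G (v n)) atTop (nhds 0) := by
    have hmul : Tendsto (fun n : ℕ => ((n : ℝ) * (1 - G (v n))) * (n : ℝ)⁻¹) atTop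
        (nhds (-Real.log γ * 0)) := h5.mul tendsto_inv_atTop_nhds_zero_nat
    rw [mul_zero] at hmul
    refine hmul.congr' ?_
    filter_upwards [eventually_ge_atTop 1] with n hn
    have : (n : ℝ) ≠ 0 := Nat.cast_ne_zero.2 (by omega)
    field_simp
  -- ratio of consecutive tails → 1
  have hratio : Tendsto (fun n => (1 - G (v n)) / (1 - G (v (n + 1)))) atTop (nhds 1) := by
    have hA1 : Tendsto (fun n : ℕ => ((n : ℝ) + 1) * (1 - G (v (n + 1)))) atTop
        (nhds (-Real.log γ)) := by
      have := h5.comp (tendsto_add_atTop_nat 1)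
      refine this.congr fun n => ?_
      simp only [Function.comp]
      push_cast
      ring_nf
    have hdiv : Tendsto (fun n : ℕ => ((n : ℝ) * (1 - G (v n))) /
        (((n : ℝ) + 1) * (1 - G (v (n + 1))))) atTop (nhds (-Real.log γ / -Real.log γ)) :=
      h5.div hA1 (ne_of_gt hc0pos)
    rw [div_self (ne_of_gt hc0pos)] at hdiv
    have hfrac : Tendsto (fun n : ℕ => ((n : ℝ) + 1) / (n : ℝ)) atTop (nhds 1) := by
      have := (tendsto_inv_atTop_nhds_zero_nat (𝕜 := ℝ)).const_add 1
      rw [add_zero] at this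
      refine this.congr' ?_
      filter_upwards [eventually_ge_atTop 1] with n hn
      have : (n : ℝ) ≠ 0 := Nat.cast_ne_zero.2 (by omega)
      field_simp
    have hmul := hdiv.mul hfrac
    rw [mul_one] at hmul
    refine hmul.congr' ?_
    filter_upwards [(tendsto_add_atTop_nat 1).eventually hB, eventually_ge_atTop 1] with n hn hn1
    have hpos : 0 < 1 - G (v (n + 1)) := by have := hn.2; linarith
    have hn0 : (n : ℝ) ≠ 0 := Nat.cast_ne_zero.2 (by omega)
    have hn1' : ((n : ℝ) + 1) ≠ 0 := by positivity
    field_simp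
  -- choose N₀
  obtain ⟨N₀, hN₀⟩ := eventually_atTop.1 hB
  -- v n ≤ c for good n, and strictly
  have hmemle : ∀ n, N₀ ≤ n → ((v n : EReal)) ≤ c := fun n hn =>
    le_sSup ⟨v n, (hN₀ n hn).2, rfl⟩
  have hlt : ∀ n, N₀ ≤ n → ((v n : EReal)) < c := by
    intro n hn
    refine lt_of_le_of_ne (hmemle n hn) fun heq => ?_
    have hev : ∀ᶠ m in atTop, G (v n) < G (v m) :=
      h3.eventually (eventually_gt_nhds (hN₀ n hn).2)
    obtain ⟨m, hm1, hm2⟩ := (hev.and (eventually_ge_atTop N₀)).exists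
    have : (v m : EReal) ≤ (v n : EReal) := heq ▸ hmemle m hm2
    exact absurd (hmono (EReal.coe_le_coe_iff.1 this)) (not_le.2 hm1)
  -- v n tends to c from the left
  have htend : Tendsto (fun n => (v n : EReal)) atTop (nhdsWithin c (Set.Iio c)) := by
    rw [tendsto_nhdsWithin_iff]
    constructor
    · refine tendsto_order.2 ⟨fun b hb => ?_, fun b hb => ?_⟩
      · obtain ⟨z, hz, hbz⟩ := lt_sSup_iff.1 hb
        obtain ⟨zr, hzr, rfl⟩ := hz
        have hev : ∀ᶠ m in atTop, G zr < G (v m) := h3.eventually (eventually_gt_nhds hzr)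
        filter_upwards [hev] with m hm
        refine lt_of_lt_of_le hbz ?_
        have : zr < v m := by
          by_contra h
          exact absurd (hmono (not_lt.1 h)) (not_le.2 hm)
        exact EReal.coe_le_coe_iff.2 this.le
      · filter_upwards [eventually_ge_atTop N₀] with m hm
        exact lt_of_le_of_lt (hmemle m hm) hb
    · filter_upwards [eventually_ge_atTop N₀] with m hm
      exact hlt m hm
  have hvt : Tendsto v atTop (leftFilter c) := by
    rw [leftFilter, tendsto_comap_iff]
    exact htend
  rcases hirr with ⟨L, hL1, hLt⟩ | hls
  · exact absurd (tendsto_nhds_unique (hLt.comp hvt) h3) (ne_of_lt hL1)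
  -- limsup case
  · -- c > ⊥
    have hx0 : ∃ x₀ : ℝ, G x₀ < 1 := by
      obtain ⟨x₀, hx₀⟩ := (hbot.eventually (eventually_lt_nhds one_pos)).exists
      exact ⟨x₀, hx₀⟩
    obtain ⟨x₀, hx₀⟩ := hx0
    have hcbot : (⊥ : EReal) < c :=
      lt_of_lt_of_le (EReal.bot_lt_coe x₀) (le_sSup ⟨x₀, hx₀, rfl⟩)
    -- leftFilter c is NeBot
    have hnb : (leftFilter c).NeBot := by
      rw [leftFilter, Filter.comap_neBot_iff]
      intro t ht
      obtain ⟨l, hl, hsub⟩ := (mem_nhdsLT_iff_exists_Ioo_subset' hcbot).1 ht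
      obtain ⟨y, hy1, hy2⟩ := EReal.exists_between_coe_real hl
      exact ⟨y, hsub ⟨hy1, hy2⟩⟩
    -- eventually, along the left filter, x exceeds any fixed good v n
    have hev_gt : ∀ n, N₀ ≤ n → ∀ᶠ x in leftFilter c, v n < x := by
      intro n hn
      have hIoi : Set.Ioi ((v n : EReal)) ∈ nhdsWithin c (Set.Iio c) :=
        mem_nhdsWithin_of_mem_nhds (isOpen_Ioi.mem_nhds (hlt n hn))
      have : (fun x : ℝ => (x : EReal)) ⁻¹' Set.Ioi ((v n : EReal)) ∈ leftFilter c :=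
        preimage_mem_comap hIoi
      filter_upwards [this] with x hx
      exact EReal.coe_lt_coe_iff.1 hx
    -- eventually G x < 1 along the left filter
    have hev_lt1 : ∀ᶠ x in leftFilter c, G x < 1 := by
      have : (fun x : ℝ => (x : EReal)) ⁻¹' Set.Iio c ∈ leftFilter c :=
        preimage_mem_comap self_mem_nhdsWithin
      filter_upwards [this] with x hx
      simp only [Set.mem_preimage, Set.mem_Iio] at hx
      obtain ⟨z, hz, hxz⟩ := lt_sSup_iff.1 hx
      obtain ⟨zr, hzr, rfl⟩ := hz
      exact lt_of_le_of_lt (hmono (EReal.coe_lt_coe_iff.1 hxz).le) hzr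
    set R := fun x => (1 - Function.leftLim G x) / (1 - G x) with hR
    have hRge1 : ∀ᶠ x in leftFilter c, (1 : ℝ) ≤ R x := by
      filter_upwards [hev_lt1] with x hx
      have hpos : 0 < 1 - G x := by linarith
      have hll : Function.leftLim G x ≤ G x := hmono.leftLim_le le_rfl
      rw [hR, one_le_div hpos]
      linarith
    have hcobdd : (leftFilter c).IsCoboundedUnder (· ≤ ·) R :=
      Filter.IsCoboundedUnder.of_frequently_ge hRge1.frequently
    set δ : ℝ := (Filter.limsup R (leftFilter c) - 1) / 2 with hδdef
    have hδ : 0 < δ := by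
      rw [hδdef]; rw [hc] at hls; linarith
    have h1δ : 1 + δ < Filter.limsup R (leftFilter c) := by
      rw [hδdef]; rw [hc] at hls; linarith
    have hfreq : ∃ᶠ x in leftFilter c, 1 + δ < R x :=
      frequently_lt_of_lt_limsup hcobdd h1δ
    -- choose N₁
    have hrev : ∀ᶠ n in atTop, (1 - G (v n)) / (1 - G (v (n + 1))) < 1 + δ :=
      hratio.eventually (eventually_lt_nhds (by linarith))
    obtain ⟨N₁', hN₁'⟩ := eventually_atTop.1 hrev
    set N₁ : ℕ := max N₁' N₀ with hN₁def
    have hN₁r : ∀ n, N₁ ≤ n → (1 - G (v n)) / (1 - G (v (n + 1))) < 1 + δ :=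
      fun n hn => hN₁' n (le_trans (le_max_left _ _) hn)
    have hN₁0 : N₀ ≤ N₁ := le_max_right _ _
    have hNpos : ∀ n, N₁ ≤ n → 0 < 1 - G (v n) := by
      intro n hn
      have := (hN₀ n (le_trans hN₁0 hn)).2
      linarith
    -- pick x
    obtain ⟨x, hRx, hvx⟩ := (hfreq.and_eventually (hev_gt N₁ hN₁0)).exists
    set a : ℝ := 1 - G x with ha_def
    set b : ℝ := 1 - Function.leftLim G x with hb_def
    have ha : 0 < a := by
      rcases lt_or_ge (G x) 1 with h | h
      · rw [ha_def]; linarith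
      · exfalso
        have hx1 : G x = 1 := le_antisymm (hle1 x) h
        rw [hR] at hRx
        simp only [hx1, sub_self, div_zero] at hRx
        linarith
    have hba : (1 + δ) * a ≤ b := by
      rw [hR] at hRx
      have := (lt_div_iff₀ ha).1 hRx
      rw [hb_def]; linarith
    have hbN₁ : b ≤ 1 - G (v N₁) := by
      have : G (v N₁) ≤ Function.leftLim G x := hmono.le_leftLim hvx
      rw [hb_def]; linarith
    have havoid : ∀ y : ℝ, 1 - G y ≤ a ∨ b ≤ 1 - G y := by
      intro y
      rcases le_or_gt x y with h | h
      · left; rw [ha_def]; have := hmono h; linarith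
      · right; rw [hb_def]; have := hmono.le_leftLim h; linarith
    -- least n ≥ N₁ with 1 - G (v n) ≤ a
    have hex : ∃ n, N₁ ≤ n ∧ 1 - G (v n) ≤ a := by
      obtain ⟨n, hn1, hn2⟩ :=
        ((h6.eventually (eventually_lt_nhds ha)).and (eventually_ge_atTop N₁)).exists
      exact ⟨n, hn2, hn1.le⟩
    obtain ⟨m, ⟨hm1, hm2⟩, hmmin⟩ : ∃ m, (N₁ ≤ m ∧ 1 - G (v m) ≤ a) ∧
        ∀ k < m, ¬ (N₁ ≤ k ∧ 1 - G (v k) ≤ a) :=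
      ⟨Nat.find hex, Nat.find_spec hex, fun k hk => Nat.find_min hex hk⟩
    have hmN : N₁ < m := by
      rcases lt_or_eq_of_le hm1 with h | h
      · exact h
      · exfalso
        rw [← h] at hm2
        nlinarith
    have hprev : ¬ (N₁ ≤ m - 1 ∧ 1 - G (v (m - 1)) ≤ a) := hmmin (m - 1) (by omega)
    have hprevN : N₁ ≤ m - 1 := by omega
    have hprev2 : a < 1 - G (v (m - 1)) := by
      by_contra h
      exact hprev ⟨hprevN, not_lt.1 h⟩
    have hprevb : b ≤ 1 - G (v (m - 1)) := by
      rcases havoid (v (m - 1)) with h | h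
      · linarith
      · exact h
    have hmpos : 0 < 1 - G (v m) := hNpos m hm1
    have hkey : 1 + δ ≤ (1 - G (v (m - 1))) / (1 - G (v m)) := by
      have h1 : (1 + δ) ≤ b / (1 - G (v m)) := by
        rw [le_div_iff₀ hmpos]
        calc (1 + δ) * (1 - G (v m)) ≤ (1 + δ) * a := by nlinarith
          _ ≤ b := hba
      refine le_trans h1 ?_
      gcongr
    have hcontra := hN₁r (m - 1) hprevN
    rw [show m - 1 + 1 = m by omega] at hcontra
    linarith
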